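/- arXiv:math/0612548 — 3 statements merged into one kernel-verified Lean document; each statement's English description precedes it below -/
import Mathlib

section
/- Let z be a homogeneous element of degree n ≥ 1 of T. Then z belongs to the free Lie algebra L if and only if γ(z) = z. (Friedrichs–Specht–Wever criterion.) -/
noncomputable section

open scoped BigOperators

variable (K : Type) [Field K] [CharZero K]
set_option linter.unusedSectionVars false

attribute [local instance 100] LieRing.ofAssociativeRing
attribute [local instance 100] LieAlgebra.ofAssociativeAlgebra

/-- The free associative algebra `T = K⟨x,y⟩`, realized as the monoid algebra of the
free monoid on two generators. -/
abbrev T := MonoidAlgebra K (FreeMonoid (Fin 2))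

/-- The word `v₁⋯vₙ` (a list of letters) as an element of `T`. -/
def word (l : List (Fin 2)) : T K := MonoidAlgebra.single (FreeMonoid.ofList l) 1

/-- The generator `x`. -/
def X : T K := word K [0]

/-- The generator `y`. -/
def Y : T K := word K [1]

/-- Right-nested bracket `[v₁,[v₂,…,[vₙ₋₁,vₙ]…]]` of a word. -/
def brList : List (Fin 2) → T K
  | [] => 0
  | [v] => word K [v]
  | v :: rest => word K [v] * brList rest - brList rest * word K [v]

/-- The Dynkin map `γ : T → T`, sending a word `v₁⋯vₙ` to
`(1/n)[v₁,[v₂,…,[vₙ₋₁,vₙ]…]]` (and `1 ↦ 0`). -/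
def dynkin : T K →ₗ[K] T K :=
  (Finsupp.linearCombination K fun w : FreeMonoid (Fin 2) =>
    ((w.toList.length : K)⁻¹) • brList K w.toList)
  ∘ₗ (MonoidAlgebra.coeffLinearEquiv K).toLinearMap

/-- The free Lie algebra `L` on `x, y`, as the Lie subalgebra of `T` generated by `x` and `y`. -/
def L : LieSubalgebra K (T K) := LieSubalgebra.lieSpan K (T K) {X K, Y K}

/-- The degree-`n` homogeneous component `T_n` of `T`, spanned by the words of length `n`. -/
def homog (n : ℕ) : Submodule K (T K) :=
  Submodule.span K { t | ∃ l : List (Fin 2), l.length = n ∧ t = word K l }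

/-- The value `σ(i)` of a permutation of `{0,…,n-1}` on a natural number (junk value `0`
outside the range). -/
def permVal {n : ℕ} (σ : Equiv.Perm (Fin n)) (i : ℕ) : ℕ :=
  if h : i < n then (σ ⟨i, h⟩ : ℕ) else 0

/-- The (0-indexed) descent set of a permutation: positions `i ∈ {0,…,n-2}` with
`σ(i) > σ(i+1)`. -/
def descSet {n : ℕ} (σ : Equiv.Perm (Fin n)) : Finset ℕ :=
  (Finset.range (n - 1)).filter fun i => permVal σ (i + 1) < permVal σ i

/-- The number of descents of a permutation. -/
def descNum {n : ℕ} (σ : Equiv.Perm (Fin n)) : ℕ := (descSet σ).card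

/-- `DSet n k` is the set of permutations of `{0,…,n-1}` whose descent set is exactly
the first `k` positions (this is `D_{1..k}` of the paper, in 0-indexed form). -/
def DSet (n k : ℕ) : Finset (Equiv.Perm (Fin n)) :=
  Finset.univ.filter fun σ => descSet σ = Finset.range k

/-- The Eulerian coefficient `c_σ = (-1)^{d(σ)} (binom (n-1) (d σ))⁻¹`. -/
def eulCoeff {n : ℕ} (σ : Equiv.Perm (Fin n)) : K :=
  (-1 : K) ^ descNum σ * ((Nat.choose (n - 1) (descNum σ) : K))⁻¹

/-- The degree-`n` Eulerian idempotent applied to the word `w₁⋯wₙ` given by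
`v : Fin n → Fin 2`: `eₙ(w) = Σ_σ c_σ w^σ`. -/
def eul (n : ℕ) (v : Fin n → Fin 2) : T K :=
  ∑ σ : Equiv.Perm (Fin n), eulCoeff K σ • word K (List.ofFn fun i => v (σ i))

/-- The `a`-part of an element of `T`: the linear map sending a word `a·w ↦ w` and
any word not starting with the letter `a` (or the empty word) to `0`.  For `p` with zero
constant term, `p = x·(letterPart 0 p) + y·(letterPart 1 p)`. -/
def letterPart (a : Fin 2) : T K →ₗ[K] T K :=
  (Finsupp.linearCombination K fun w : FreeMonoid (Fin 2) =>
    match w.toList with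
    | [] => 0
    | b :: rest => if b = a then word K rest else 0)
  ∘ₗ (MonoidAlgebra.coeffLinearEquiv K).toLinearMap

/-- The algebra endomorphism `s : T → T` with `s(x) = -y`, `s(y) = -x`. -/
def sMap : T K →ₐ[K] T K :=
  MonoidAlgebra.lift K (T K) (FreeMonoid (Fin 2))
    (FreeMonoid.lift fun a : Fin 2 => if a = 0 then -(Y K) else -(X K))




lemma word_mul (u w : List (Fin 2)) : word K u * word K w = word K (u ++ w) := by
  simp [word, MonoidAlgebra.single_mul_single, FreeMonoid.ofList_append]

lemma word_nil : word K [] = 1 := rfl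

lemma word_cons (a : Fin 2) (u : List (Fin 2)) :
    word K (a :: u) = word K [a] * word K u := by
  rw [word_mul]; rfl

lemma single_eq_smul_word (a : FreeMonoid (Fin 2)) (b : K) :
    (MonoidAlgebra.single a b : T K) = b • word K a.toList := by
  rw [word, MonoidAlgebra.smul_single', mul_one, FreeMonoid.ofList_toList]

lemma coeffLE_single (a : FreeMonoid (Fin 2)) (b : K) :
    MonoidAlgebra.coeffLinearEquiv K (MonoidAlgebra.single a b : T K) = Finsupp.single a b := rfl

lemma brList_cons (a : Fin 2) (l : List (Fin 2)) (hl : l ≠ []) :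
    brList K (a :: l) = word K [a] * brList K l - brList K l * word K [a] := by
  cases l with
  | nil => exact absurd rfl hl
  | cons b t => rfl

/-- The unnormalized Dynkin map. -/
def Dmap : T K →ₗ[K] T K :=
  (Finsupp.linearCombination K fun w : FreeMonoid (Fin 2) => brList K w.toList)
  ∘ₗ (MonoidAlgebra.coeffLinearEquiv K).toLinearMap

lemma Dmap_word (l : List (Fin 2)) : Dmap K (word K l) = brList K l := by
  rw [Dmap, word, LinearMap.comp_apply, LinearEquiv.coe_coe, coeffLE_single]
  erw [Finsupp.linearCombination_single]
  rw [FreeMonoid.toList_ofList, one_smul]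

/-- The grading (Euler) operator. -/
def Emap : T K →ₗ[K] T K :=
  (Finsupp.linearCombination K fun w : FreeMonoid (Fin 2) =>
    (w.toList.length : K) • word K w.toList)
  ∘ₗ (MonoidAlgebra.coeffLinearEquiv K).toLinearMap

lemma Emap_word (l : List (Fin 2)) :
    Emap K (word K l) = (l.length : K) • word K l := by
  rw [Emap, word, LinearMap.comp_apply, LinearEquiv.coe_coe, coeffLE_single]
  erw [Finsupp.linearCombination_single]
  rw [FreeMonoid.toList_ofList, one_smul, word]

lemma dynkin_word (l : List (Fin 2)) :
    dynkin K (word K l) = ((l.length : K)⁻¹) • brList K l := by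
  rw [dynkin, word, LinearMap.comp_apply, LinearEquiv.coe_coe, coeffLE_single]
  erw [Finsupp.linearCombination_single]
  rw [FreeMonoid.toList_ofList, one_smul]

/-- ad as a linear map. -/
def adL : T K →ₗ[K] Module.End K (T K) :=
  LinearMap.mul K (T K) - (LinearMap.mul K (T K)).flip

lemma adL_apply (u z : T K) : adL K u z = u * z - z * u := rfl

def rho : T K →ₐ[K] Module.End K (T K) :=
  MonoidAlgebra.lift K _ (FreeMonoid (Fin 2))
    (FreeMonoid.lift fun a : Fin 2 => adL K (word K [a]))

lemma rho_letter (a : Fin 2) : rho K (word K [a]) = adL K (word K [a]) := by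
  have : word K [a] = MonoidAlgebra.single (FreeMonoid.of a) (1 : K) := rfl
  conv_lhs => rw [this, rho, MonoidAlgebra.lift_single, FreeMonoid.lift_eval_of]
  rw [one_smul]
-- AUX END

/-- Span of nonempty words. -/
def NW : Submodule K (T K) :=
  Submodule.span K {t | ∃ l : List (Fin 2), l ≠ [] ∧ t = word K l}

lemma word_mem_NW (l : List (Fin 2)) (hl : l ≠ []) : word K l ∈ NW K :=
  Submodule.subset_span ⟨l, hl, rfl⟩

lemma Dmap_mul_word (u l : List (Fin 2)) (hl : l ≠ []) :
    Dmap K (word K u * word K l) = rho K (word K u) (Dmap K (word K l)) := by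
  induction u with
  | nil => rw [word_nil, one_mul, map_one]; rfl
  | cons a u ih =>
    have hne : u ++ l ≠ [] := by simp [hl]
    have h1 : word K (a :: u) * word K l = word K (a :: (u ++ l)) := by
      rw [word_mul]; rfl
    rw [h1, Dmap_word, brList_cons K a _ hne, word_cons K a u, map_mul,
      Module.End.mul_apply, ← ih, word_mul, Dmap_word, rho_letter, adL_apply]

lemma Dmap_mul (p z : T K) (hz : z ∈ NW K) :
    Dmap K (p * z) = rho K p (Dmap K z) := by
  induction hz using Submodule.span_induction with
  | mem t ht =>
    obtain ⟨l, hl, rfl⟩ := ht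
    induction p using MonoidAlgebra.induction_linear with
    | zero => simp
    | add f g hf hg =>
      rw [add_mul, map_add, hf, hg, map_add, LinearMap.add_apply]
    | single a b =>
      rw [single_eq_smul_word K a b, smul_mul_assoc, map_smul, map_smul,
        LinearMap.smul_apply, Dmap_mul_word K _ l hl]
  | zero => simp
  | add y w hy hw ihy ihw => rw [mul_add, map_add, ihy, ihw, map_add, ← map_add]
  | smul a y hy ihy => rw [mul_smul_comm, map_smul, ihy, map_smul, ← map_smul]

lemma rho_eq_adL (u : T K) (hu : u ∈ L K) : rho K u = adL K u := by
  let C : LieSubalgebra K (T K) :=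
    { LinearMap.ker ((rho K).toLinearMap - adL K) with
      lie_mem' := by
        intro a b ha hb
        have ha' : rho K a = adL K a := by
          have h := LinearMap.mem_ker.mp ha
          rwa [LinearMap.sub_apply, sub_eq_zero, AlgHom.toLinearMap_apply] at h
        have hb' : rho K b = adL K b := by
          have h := LinearMap.mem_ker.mp hb
          rwa [LinearMap.sub_apply, sub_eq_zero, AlgHom.toLinearMap_apply] at h
        show ⁅a, b⁆ ∈ LinearMap.ker ((rho K).toLinearMap - adL K)
        rw [LinearMap.mem_ker, LinearMap.sub_apply, sub_eq_zero, AlgHom.toLinearMap_apply,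
          Ring.lie_def, map_sub, map_mul, map_mul, ha', hb', map_sub]
        refine LinearMap.ext fun z => ?_
        simp only [LinearMap.coe_comp, Function.comp_apply, MonoidAlgebra.lsingle_apply,
          LinearMap.sub_apply, Module.End.mul_apply, adL_apply]
        noncomm_ring }
  have hXY : {X K, Y K} ⊆ (C : Set (T K)) := by
    have h : ∀ a : Fin 2, word K [a] ∈ C := fun a => by
      show _ ∈ LinearMap.ker ((rho K).toLinearMap - adL K)
      rw [LinearMap.mem_ker, LinearMap.sub_apply, sub_eq_zero, AlgHom.toLinearMap_apply,
        rho_letter]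
    rintro t (rfl | rfl)
    exacts [h 0, h 1]
  have hle : L K ≤ C := (LieSubalgebra.lieSpan_le).mpr hXY
  have h2 : u ∈ LinearMap.ker ((rho K).toLinearMap - adL K) := hle hu
  rw [LinearMap.mem_ker, LinearMap.sub_apply, sub_eq_zero, AlgHom.toLinearMap_apply] at h2
  exact h2

lemma Emap_mul_word (u w : List (Fin 2)) :
    Emap K (word K u * word K w)
      = Emap K (word K u) * word K w + word K u * Emap K (word K w) := by
  rw [word_mul, Emap_word, Emap_word, Emap_word, smul_mul_assoc, mul_smul_comm, word_mul,
    ← add_smul, List.length_append, Nat.cast_add]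

lemma Emap_mul (p q : T K) : Emap K (p * q) = Emap K p * q + p * Emap K q := by
  induction p using MonoidAlgebra.induction_linear with
  | zero => simp
  | add f g hf hg =>
    simp only [map_add, add_mul, hf, hg]; abel
  | single a b =>
    induction q using MonoidAlgebra.induction_linear with
    | zero => simp
    | add f g hf hg =>
      simp only [map_add, mul_add, hf, hg]; abel
    | single c d =>
      rw [single_eq_smul_word K a b, single_eq_smul_word K c d]
      simp only [smul_mul_assoc, mul_smul_comm, map_smul]
      rw [Emap_mul_word]
      simp only [smul_add, smul_mul_assoc, mul_smul_comm, smul_smul, mul_comm b d]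

lemma NW_mul (p q : T K) (hp : p ∈ NW K) (hq : q ∈ NW K) : p * q ∈ NW K := by
  induction hp using Submodule.span_induction with
  | mem t ht =>
    obtain ⟨u, hu, rfl⟩ := ht
    induction hq using Submodule.span_induction with
    | mem s hs =>
      obtain ⟨w, hw, rfl⟩ := hs
      rw [word_mul]; exact word_mem_NW K _ (by simp [hu])
    | zero => rw [mul_zero]; exact (NW K).zero_mem
    | add y z hy hz ihy ihz => rw [mul_add]; exact (NW K).add_mem ihy ihz
    | smul a y hy ihy => rw [mul_smul_comm]; exact (NW K).smul_mem a ihy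
  | zero => rw [zero_mul]; exact (NW K).zero_mem
  | add y z hy hz ihy ihz => rw [add_mul]; exact (NW K).add_mem ihy ihz
  | smul a y hy ihy => rw [smul_mul_assoc]; exact (NW K).smul_mem a ihy

lemma mem_L_imp (u : T K) (hu : u ∈ L K) :
    u ∈ NW K ∧ Dmap K u = Emap K u := by
  let C : LieSubalgebra K (T K) :=
    { (L K).toSubmodule ⊓ NW K ⊓ LinearMap.ker (Dmap K - Emap K) with
      lie_mem' := by
        rintro a b ⟨⟨haL, haN⟩, haD⟩ ⟨⟨hbL, hbN⟩, hbD⟩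
        have haD' : Dmap K a = Emap K a := by
          have h := LinearMap.mem_ker.mp haD
          rwa [LinearMap.sub_apply, sub_eq_zero] at h
        have hbD' : Dmap K b = Emap K b := by
          have h := LinearMap.mem_ker.mp hbD
          rwa [LinearMap.sub_apply, sub_eq_zero] at h
        refine ⟨⟨(L K).lie_mem haL hbL, ?_⟩, ?_⟩
        · rw [Ring.lie_def]
          exact (NW K).sub_mem (NW_mul K a b haN hbN) (NW_mul K b a hbN haN)
        · show _ ∈ LinearMap.ker (Dmap K - Emap K)
          rw [LinearMap.mem_ker, LinearMap.sub_apply, sub_eq_zero, Ring.lie_def,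
            map_sub, map_sub, Dmap_mul K a b hbN, Dmap_mul K b a haN,
            rho_eq_adL K a haL, rho_eq_adL K b hbL, haD', hbD', adL_apply, adL_apply,
            Emap_mul, Emap_mul]
          abel }
  have hXY : {X K, Y K} ⊆ (C : Set (T K)) := by
    have h : ∀ a : Fin 2, word K [a] ∈ C := by
      intro a
      refine ⟨⟨?_, word_mem_NW K [a] (by simp)⟩, ?_⟩
      · show word K [a] ∈ L K
        apply LieSubalgebra.subset_lieSpan
        fin_cases a
        · exact Or.inl rfl
        · exact Or.inr rfl
      · show _ ∈ LinearMap.ker (Dmap K - Emap K)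
        rw [LinearMap.mem_ker, LinearMap.sub_apply, sub_eq_zero, Dmap_word, Emap_word]
        show word K [a] = ((1 : ℕ) : K) • word K [a]
        rw [Nat.cast_one, one_smul]
    rintro t (rfl | rfl)
    exacts [h 0, h 1]
  have hle : L K ≤ C := (LieSubalgebra.lieSpan_le).mpr hXY
  obtain ⟨⟨-, hN⟩, hD⟩ := hle hu
  refine ⟨hN, ?_⟩
  have h := LinearMap.mem_ker.mp hD
  rwa [LinearMap.sub_apply, sub_eq_zero] at h

lemma brList_mem_L : ∀ l : List (Fin 2), brList K l ∈ L K := by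
  intro l
  induction l with
  | nil => exact (L K).zero_mem'
  | cons a t ih =>
    cases t with
    | nil =>
      show word K [a] ∈ L K
      apply LieSubalgebra.subset_lieSpan
      fin_cases a
      · exact Or.inl rfl
      · exact Or.inr rfl
    | cons b s =>
      have ha : word K [a] ∈ L K := by
        apply LieSubalgebra.subset_lieSpan
        fin_cases a
        · exact Or.inl rfl
        · exact Or.inr rfl
      have h := (L K).lie_mem ha ih
      rw [Ring.lie_def] at h
      exact h

lemma dynkin_mem_L (z : T K) : dynkin K z ∈ L K := by
  induction z using MonoidAlgebra.induction_linear with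
  | zero => rw [map_zero]; exact (L K).zero_mem'
  | add f g hf hg => rw [map_add]; exact (L K).add_mem hf hg
  | single a b =>
    rw [single_eq_smul_word K a b, map_smul, dynkin_word]
    exact (L K).smul_mem b ((L K).smul_mem _ (brList_mem_L K a.toList))

lemma Emap_homog (n : ℕ) (z : T K) (hz : z ∈ homog K n) : Emap K z = (n : K) • z := by
  induction hz using Submodule.span_induction with
  | mem t ht => obtain ⟨l, hl, rfl⟩ := ht; rw [Emap_word, hl]
  | zero => simp
  | add y w hy hw ihy ihw => rw [map_add, ihy, ihw, smul_add]
  | smul a y hy ihy => rw [map_smul, ihy, smul_comm]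

lemma dynkin_homog (n : ℕ) (z : T K) (hz : z ∈ homog K n) :
    dynkin K z = ((n : K))⁻¹ • Dmap K z := by
  induction hz using Submodule.span_induction with
  | mem t ht => obtain ⟨l, hl, rfl⟩ := ht; rw [dynkin_word, Dmap_word, hl]
  | zero => simp
  | add y w hy hw ihy ihw => rw [map_add, map_add, ihy, ihw, smul_add]
  | smul a y hy ihy => rw [map_smul, map_smul, ihy, smul_comm]


/-- **Friedrichs–Specht–Wever criterion.**  A homogeneous element `z` of degree `n ≥ 1`
of `T` belongs to the free Lie algebra `L` if and only if `γ(z) = z`. -/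
theorem stmt0 (n : ℕ) (hn : 1 ≤ n) (z : T K) (hz : z ∈ homog K n) :
    z ∈ L K ↔ dynkin K z = z := by
  constructor
  · intro hzL
    have hnK : (n : K) ≠ 0 := Nat.cast_ne_zero.mpr (by omega)
    rw [dynkin_homog K n z hz, (mem_L_imp K z hzL).2, Emap_homog K n z hz,
      smul_smul, inv_mul_cancel₀ hnK, one_smul]
  · intro h
    rw [← h]
    exact dynkin_mem_L K z


end
end

section
/- The kernel of the operator ad x : T → T, p ↦ xp − px, is exactly the K-span of the powers xⁿ (n ≥ 0), i.e. the polynomial subalgebra K[x] of T. -/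
noncomputable section

open scoped BigOperators

variable (K : Type) [Field K] [CharZero K]

section
attribute [local instance] LieRing.ofAssociativeRing
end

namespace Stmt9Aux

variable {K}
set_option linter.unusedSectionVars false

lemma ofList_inj {l m : List (Fin 2)} :
    FreeMonoid.ofList l = FreeMonoid.ofList m ↔ l = m :=
  ⟨fun h => by simpa using congrArg FreeMonoid.toList h, fun h => by rw [h]⟩

lemma Xmul_apply (p : T K) (l : List (Fin 2)) :
    (X K * p).coeff (FreeMonoid.ofList (0 :: l)) = p.coeff (FreeMonoid.ofList l) := by
  rw [show X K = MonoidAlgebra.single (FreeMonoid.ofList [0]) 1 from rfl,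
    MonoidAlgebra.single_mul_apply_aux, one_mul]
  intro a _
  rw [show FreeMonoid.ofList [0] * a = FreeMonoid.ofList (0 :: a.toList) from rfl, ofList_inj]
  constructor
  · intro h
    rw [← FreeMonoid.ofList_toList a]
    exact congrArg _ ((List.cons_eq_cons.mp h).2)
  · intro h; subst h; rfl

lemma mulX_apply (p : T K) (l : List (Fin 2)) :
    (p * X K).coeff (FreeMonoid.ofList (l ++ [0])) = p.coeff (FreeMonoid.ofList l) := by
  rw [show X K = MonoidAlgebra.single (FreeMonoid.ofList [0]) 1 from rfl,
    MonoidAlgebra.mul_single_apply_aux, mul_one]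
  intro a _
  rw [show a * FreeMonoid.ofList [0] = FreeMonoid.ofList (a.toList ++ [0]) from rfl, ofList_inj]
  constructor
  · intro h
    rw [← FreeMonoid.ofList_toList a]
    exact congrArg _ (List.append_cancel_right h)
  · intro h; subst h; rfl

lemma mulX_apply_zero (p : T K) (l : List (Fin 2)) :
    (p * X K).coeff (FreeMonoid.ofList (l ++ [1])) = 0 := by
  rw [show X K = MonoidAlgebra.single (FreeMonoid.ofList [0]) 1 from rfl]
  apply MonoidAlgebra.mul_single_apply_of_not_exists_mul
  rintro ⟨d, hd⟩
  have : l ++ [1] = d.toList ++ [0] := by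
    simpa using congrArg FreeMonoid.toList hd
  have h1 := congrArg List.getLast? this
  simp [List.getLast?_concat] at h1


lemma decomp (l : List (Fin 2)) :
    (∃ n, l = List.replicate n 0) ∨ ∃ m k, l = (m ++ [1]) ++ List.replicate k 0 := by
  induction l using List.reverseRecOn with
  | nil => exact Or.inl ⟨0, rfl⟩
  | append_singleton m a ih =>
    rcases (by decide : ∀ b : Fin 2, b = 0 ∨ b = 1) a with rfl | rfl
    · rcases ih with ⟨n, rfl⟩ | ⟨m', k, rfl⟩
      · exact Or.inl ⟨n + 1, by rw [List.replicate_succ']⟩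
      · exact Or.inr ⟨m', k + 1, by rw [List.replicate_succ']; simp⟩
    · exact Or.inr ⟨m, 0, by simp⟩

variable {p : T K} (h : X K * p = p * X K)
include h

lemma relR (l : List (Fin 2)) :
    p.coeff (FreeMonoid.ofList (l ++ [0])) = p.coeff (FreeMonoid.ofList (0 :: l)) := by
  have h1 := Xmul_apply p (l ++ [0])
  have h2 := mulX_apply p (0 :: l)
  rw [h] at h1
  exact h1.symm.trans h2

lemma end1 (l : List (Fin 2)) : p.coeff (FreeMonoid.ofList (l ++ [1])) = 0 := by
  have h1 := Xmul_apply p (l ++ [1])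
  rw [h] at h1
  rw [show (0 : Fin 2) :: (l ++ [1]) = (0 :: l) ++ [1] by simp, mulX_apply_zero] at h1
  exact h1.symm

lemma moveX (k : ℕ) (m : List (Fin 2)) :
    p.coeff (FreeMonoid.ofList (m ++ List.replicate k 0)) =
      p.coeff (FreeMonoid.ofList (List.replicate k 0 ++ m)) := by
  induction k generalizing m with
  | zero => simp
  | succ k ih =>
    rw [List.replicate_succ', ← List.append_assoc, relR h, show
      (0 : Fin 2) :: (m ++ List.replicate k 0) = (0 :: m) ++ List.replicate k 0 by simp,
      ih (0 :: m), show List.replicate k (0 : Fin 2) ++ 0 :: m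
        = List.replicate (k+1) 0 ++ m by simp [List.replicate_succ', List.append_assoc],
      List.replicate_succ']

lemma vanish (l : List (Fin 2)) (hl : ∀ n, l ≠ List.replicate n 0) :
    p.coeff (FreeMonoid.ofList l) = 0 := by
  rcases decomp l with ⟨n, rfl⟩ | ⟨m, k, rfl⟩
  · exact absurd rfl (hl n)
  · rw [moveX h, ← List.append_assoc, end1 h]

end Stmt9Aux

lemma X_pow (n : ℕ) :
    X K ^ n = MonoidAlgebra.single (FreeMonoid.ofList (List.replicate n 0)) (1 : K) := by
  induction n with
  | zero => rfl
  | succ n ih =>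
    rw [pow_succ', ih, show X K = MonoidAlgebra.single (FreeMonoid.ofList [0]) (1:K) from rfl,
      MonoidAlgebra.single_mul_single, one_mul, List.replicate_succ]
    rfl


/-- The kernel of `ad x : T → T` is exactly the polynomial subalgebra `K[x]`,
i.e. the `K`-span of the powers of `x`. -/
theorem stmt9 :
    { p : T K | ⁅X K, p⁆ = 0 } =
      (Submodule.span K (Set.range fun n : ℕ => X K ^ n) : Set (T K)) := by
  ext p
  simp only [Set.mem_setOf_eq, SetLike.mem_coe, Ring.lie_def, sub_eq_zero]
  constructor
  · intro h
    have key : ∀ w ∈ p.coeff.support, MonoidAlgebra.single w (p.coeff w) ∈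
        Submodule.span K (Set.range fun n : ℕ => X K ^ n) := by
      intro w hw
      rcases Stmt9Aux.decomp w.toList with ⟨n, hn⟩ | ⟨m, k, hk⟩
      · have hw' : w = FreeMonoid.ofList (List.replicate n 0) := by
          rw [← hn]; rfl
        have : MonoidAlgebra.single w (p.coeff w) = p.coeff w • X K ^ n := by
          rw [X_pow, hw', MonoidAlgebra.smul_single, smul_eq_mul, mul_one]
        rw [this]
        exact Submodule.smul_mem _ _ (Submodule.subset_span ⟨n, rfl⟩)
      · exfalso
        apply Finsupp.mem_support_iff.mp hw
        have : p.coeff (FreeMonoid.ofList w.toList) = 0 := by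
          rw [hk]; rw [Stmt9Aux.moveX h, ← List.append_assoc, Stmt9Aux.end1 h]
        rwa [FreeMonoid.ofList_toList] at this
    rw [← MonoidAlgebra.sum_coeff_single p]
    exact Submodule.sum_mem _ key
  · intro hp
    induction hp using Submodule.span_induction with
    | mem t ht =>
      obtain ⟨n, rfl⟩ := ht
      exact ((Commute.refl (X K)).pow_right n).eq
    | zero => simp
    | add a b _ _ ha hb => rw [mul_add, add_mul, ha, hb]
    | smul c a _ ha => rw [mul_smul_comm, smul_mul_assoc, ha]

end
end

section
/- The kernel of the operator ad x restricted to the free Lie algebra L, i.e. {P ∈ L : [x,P] = 0}, is exactly the K-span of x. -/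
noncomputable section

open scoped BigOperators

variable (K : Type) [Field K] [CharZero K]

attribute [local instance] LieRing.ofAssociativeRing

set_option linter.unusedSectionVars false

-- AUX START
lemma X_mul_coeff (P : T K) (u : List (Fin 2)) :
    (X K * P).coeff (FreeMonoid.ofList (0 :: u)) = P.coeff (FreeMonoid.ofList u) := by
  rw [X, word, MonoidAlgebra.coeff_single_mul_eq_mul_coeff (m₂ := FreeMonoid.ofList u), one_mul]
  intro a _
  obtain ⟨la, rfl⟩ := FreeMonoid.ofList.surjective a
  rw [← FreeMonoid.ofList_append]
  simp

lemma mul_X_coeff (P : T K) (u : List (Fin 2)) :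
    (P * X K).coeff (FreeMonoid.ofList (u ++ [0])) = P.coeff (FreeMonoid.ofList u) := by
  rw [X, word, MonoidAlgebra.coeff_mul_single_eq_coeff_mul (m₂ := FreeMonoid.ofList u), mul_one]
  intro a _
  obtain ⟨la, rfl⟩ := FreeMonoid.ofList.surjective a
  rw [← FreeMonoid.ofList_append]
  simp

lemma mul_X_coeff_ne (P : T K) (u : List (Fin 2)) (hu : u.getLast? ≠ some 0) :
    (P * X K).coeff (FreeMonoid.ofList u) = 0 := by
  rw [X, word]
  apply MonoidAlgebra.mul_single_apply_of_not_exists_mul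
  rintro ⟨d, hd⟩
  obtain ⟨ld, rfl⟩ := FreeMonoid.ofList.surjective d
  rw [← FreeMonoid.ofList_append] at hd
  have : u = ld ++ [0] := FreeMonoid.ofList.injective hd
  rw [this] at hu
  simp [List.getLast?_concat] at hu

/-- Any coefficient of a word containing the letter 1 (in the form
`l ++ 1 :: 0^d`) vanishes when `P` commutes with `X`. -/
lemma coeff_with_one (P : T K) (h : X K * P = P * X K) :
    ∀ (d : ℕ) (l : List (Fin 2)), P.coeff (FreeMonoid.ofList (l ++ 1 :: List.replicate d 0)) = 0 := by
  intro d
  induction d with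
  | zero =>
    intro l
    have heq : (X K * P).coeff (FreeMonoid.ofList (0 :: (l ++ [1])))
        = (P * X K).coeff (FreeMonoid.ofList (0 :: (l ++ [1]))) := by rw [h]
    rw [X_mul_coeff] at heq
    have hlast : ((0:Fin 2) :: (l ++ [1])).getLast? ≠ some 0 := by
      have : (0 : Fin 2) :: (l ++ [1]) = ((0 :: l) ++ [1]) := by simp
      rw [this, List.getLast?_concat]
      simp
    rw [mul_X_coeff_ne K P _ hlast] at heq
    simpa using heq
  | succ d ih =>
    intro l
    have h1 : (0:Fin 2) :: (l ++ 1 :: List.replicate (d+1) 0)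
        = (0 :: (l ++ 1 :: List.replicate d 0)) ++ [0] := by
      simp [List.replicate_succ']
    have heq : (X K * P).coeff (FreeMonoid.ofList (0 :: (l ++ 1 :: List.replicate (d+1) 0)))
        = (P * X K).coeff (FreeMonoid.ofList (0 :: (l ++ 1 :: List.replicate (d+1) 0))) := by rw [h]
    rw [X_mul_coeff, h1, mul_X_coeff] at heq
    rw [heq]
    have h2 : (0:Fin 2) :: (l ++ 1 :: List.replicate d 0)
        = (0 :: l) ++ 1 :: List.replicate d 0 := by simp
    rw [h2]
    exact ih (0 :: l)

lemma one_decomp : ∀ (w : List (Fin 2)), 1 ∈ w →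
    ∃ l d, w = l ++ 1 :: List.replicate d 0 := by
  intro w
  induction w using List.reverseRecOn with
  | nil => simp
  | append_singleton w a ih =>
    intro hmem
    rcases (show a = 0 ∨ a = 1 by omega) with rfl | rfl
    · have hw : (1:Fin 2) ∈ w := by
        rcases List.mem_append.mp hmem with h | h
        · exact h
        · simp at h
      obtain ⟨l, d, rfl⟩ := ih hw
      exact ⟨l, d+1, by simp [List.replicate_succ']⟩
    · exact ⟨w, 0, by simp⟩

/-- The algebra map `T → K[t]` with `x ↦ t`, `y ↦ 0`. -/
def piMap : T K →ₐ[K] Polynomial K :=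
  MonoidAlgebra.lift K (Polynomial K) (FreeMonoid (Fin 2))
    (FreeMonoid.lift fun a : Fin 2 => if a = 0 then Polynomial.X else 0)

lemma piMap_word (l : List (Fin 2)) :
    piMap K (word K l)
      = (l.map fun a : Fin 2 => if a = 0 then (Polynomial.X : Polynomial K) else 0).prod := by
  rw [word, piMap, MonoidAlgebra.lift_single, FreeMonoid.lift_apply, one_smul,
    FreeMonoid.toList_ofList]

lemma piMap_X : piMap K (X K) = Polynomial.X := by
  rw [X, piMap_word]; simp

lemma piMap_Y : piMap K (Y K) = 0 := by
  rw [Y, piMap_word]; simp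

/-- The line `K·t` as a Lie subalgebra of the (commutative) polynomial ring. -/
def polyLine : LieSubalgebra K (Polynomial K) :=
  { Submodule.span K {Polynomial.X} with
    lie_mem' := fun {a b} _ _ => by
      rw [Ring.lie_def, mul_comm, sub_self]
      exact (Submodule.span K {Polynomial.X}).zero_mem }

lemma mem_polyLine (p : Polynomial K) :
    p ∈ polyLine K ↔ p ∈ Submodule.span K {Polynomial.X} := Iff.rfl

lemma L_le_comap : L K ≤ LieSubalgebra.comap (piMap K).toLieHom (polyLine K) := by
  rw [L, LieSubalgebra.lieSpan_le]
  rintro p (rfl | rfl)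
  · show piMap K (X K) ∈ polyLine K
    rw [piMap_X, mem_polyLine]
    exact Submodule.mem_span_singleton_self _
  · show piMap K (Y K) ∈ polyLine K
    rw [piMap_Y]
    exact (polyLine K).zero_mem

lemma coeff_replicate (P : T K)
    (hP : ∀ d l, P.coeff (FreeMonoid.ofList (l ++ 1 :: List.replicate d 0)) = 0) (m : ℕ) :
    (piMap K P).coeff m = P.coeff (FreeMonoid.ofList (List.replicate m 0)) := by
  rw [piMap, MonoidAlgebra.lift_apply, Finsupp.sum, Polynomial.finset_sum_coeff]
  rw [Finset.sum_eq_single (FreeMonoid.ofList (List.replicate m 0))]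
  · rw [Polynomial.coeff_smul, FreeMonoid.lift_apply, FreeMonoid.toList_ofList]
    simp [List.map_replicate, List.prod_replicate, Polynomial.coeff_X_pow, smul_eq_mul]
  · intro w hw hne
    by_cases h1 : (1 : Fin 2) ∈ FreeMonoid.toList w
    · obtain ⟨l, d, hld⟩ := one_decomp (FreeMonoid.toList w) h1
      exfalso
      apply Finsupp.mem_support_iff.mp hw
      have : w = FreeMonoid.ofList (l ++ 1 :: List.replicate d 0) := by
        rw [← hld, FreeMonoid.ofList_toList]
      rw [this]
      exact hP d l
    · have hall : FreeMonoid.toList w = List.replicate (FreeMonoid.toList w).length 0 := by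
        rw [List.eq_replicate_iff]
        refine ⟨rfl, fun b hb => ?_⟩
        rcases (show b = 0 ∨ b = 1 by omega) with rfl | rfl
        · rfl
        · exact absurd hb h1
      have hlen : (FreeMonoid.toList w).length ≠ m := by
        intro hm
        apply hne
        rw [← FreeMonoid.ofList_toList w, hall, hm]
      have hXpow : ((List.replicate (FreeMonoid.toList w).length (0:Fin 2)).map
          fun a : Fin 2 => if a = 0 then (Polynomial.X : Polynomial K) else 0).prod
          = Polynomial.X ^ (FreeMonoid.toList w).length := by
        simp [List.map_replicate, List.prod_replicate]
      rw [Polynomial.coeff_smul, FreeMonoid.lift_apply, hall, hXpow, Polynomial.coeff_X_pow,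
        if_neg (fun hm => hlen hm.symm), smul_zero]
  · intro hnot
    rw [Finsupp.notMem_support_iff.mp hnot]
    simp


/-- The kernel of `ad x` restricted to the free Lie algebra `L` is exactly `K·x`. -/
theorem stmt10 :
    { P : T K | P ∈ L K ∧ ⁅X K, P⁆ = 0 } =
      (Submodule.span K {X K} : Set (T K)) := by
  classical
  ext P
  simp only [Set.mem_setOf_eq, SetLike.mem_coe]
  constructor
  · rintro ⟨hPL, hcomm⟩
    have hc : X K * P = P * X K := by
      rw [Ring.lie_def] at hcomm
      exact sub_eq_zero.mp hcomm
    have hA := coeff_with_one K P hc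
    have hπ : piMap K P ∈ Submodule.span K {(Polynomial.X : Polynomial K)} :=
      (mem_polyLine K _).mp (L_le_comap K hPL)
    obtain ⟨c, hcX⟩ := Submodule.mem_span_singleton.mp hπ
    have hrep : ∀ m : ℕ, m ≠ 1 → P.coeff (FreeMonoid.ofList (List.replicate m 0)) = 0 := by
      intro m hm
      rw [← coeff_replicate K P hA m, ← hcX, Polynomial.coeff_smul, Polynomial.coeff_X,
        if_neg (fun hm' => hm hm'.symm), smul_zero]
    rw [Submodule.mem_span_singleton]
    refine ⟨P.coeff (FreeMonoid.ofList [0]), ?_⟩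
    apply MonoidAlgebra.ext; apply Finsupp.ext
    intro w
    rw [MonoidAlgebra.coeff_smul_apply]
    by_cases hw : w = FreeMonoid.ofList [0]
    · subst hw
      rw [X, word, MonoidAlgebra.single_apply, if_pos rfl, smul_eq_mul, mul_one]
    · rw [X, word, MonoidAlgebra.single_apply, if_neg (fun h => hw h.symm), smul_zero]
      by_cases h1 : (1 : Fin 2) ∈ FreeMonoid.toList w
      · obtain ⟨l, d, hld⟩ := one_decomp (FreeMonoid.toList w) h1
        rw [← FreeMonoid.ofList_toList w, hld]
        exact (hA d l).symm
      · have hall : FreeMonoid.toList w = List.replicate (FreeMonoid.toList w).length 0 := by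
          rw [List.eq_replicate_iff]
          refine ⟨rfl, fun b hb => ?_⟩
          rcases (show b = 0 ∨ b = 1 by omega) with rfl | rfl
          · rfl
          · exact absurd hb h1
        have hlen : (FreeMonoid.toList w).length ≠ 1 := by
          intro hm
          apply hw
          rw [← FreeMonoid.ofList_toList w, hall, hm]
          rfl
        rw [← FreeMonoid.ofList_toList w, hall]
        exact (hrep _ hlen).symm
  · intro hP
    obtain ⟨c, rfl⟩ := Submodule.mem_span_singleton.mp hP
    refine ⟨?_, ?_⟩
    · exact (L K).smul_mem c (LieSubalgebra.subset_lieSpan (Set.mem_insert _ _))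
    · rw [lie_smul, lie_self, smul_zero]

end
end
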